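/- Let φ: ℝ² → ℝ be a mixed homogeneous polynomial with exponent κ = (κ₁,κ₂) and homogeneous distance d_h = 1/(κ₁+κ₂), and let 1 ≤ p, q ≤ ∞. If the operator T = T_{[−1,1]²} is of restricted weak type (p,q), then 1/q ≥ 1/p − 1/(d_h + 1). -/

import Mathlib

open MeasureTheory MvPolynomial
open scoped ENNReal

/-- The averaging operator `T_R f(x) = ∫_R f(x₁ − t₁, x₂ − t₂, x₃ − φ(t)) dt`
acting on nonnegative measurable functions on ℝ³. -/
noncomputable def avgOp (φ : ℝ × ℝ → ℝ) (R : Set (ℝ × ℝ))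
    (f : ℝ × ℝ × ℝ → ℝ≥0∞) (x : ℝ × ℝ × ℝ) : ℝ≥0∞ :=
  ∫⁻ t in R, f (x.1 - t.1, x.2.1 - t.2, x.2.2 - φ t)

/-- The bilinear pairing `⟨T_R χ_E, χ_F⟩`. -/
noncomputable def pairing (φ : ℝ × ℝ → ℝ) (R : Set (ℝ × ℝ))
    (E F : Set (ℝ × ℝ × ℝ)) : ℝ≥0∞ :=
  ∫⁻ x, avgOp φ R (E.indicator 1) x * F.indicator 1 x

/-- `T_R` is of restricted weak type `(p,q)`, written in terms of the reciprocals
`pinv = 1/p`, `qinv = 1/q` (so `1 ≤ p, q ≤ ∞` corresponds to `pinv, qinv ∈ [0,1]`):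
there is `C < ∞` with `⟨T_R χ_E, χ_F⟩ ≤ C |E|^{1/p} |F|^{1−1/q}` for all measurable
`E, F ⊆ ℝ³` of finite measure. -/
def RWT (φ : ℝ × ℝ → ℝ) (R : Set (ℝ × ℝ)) (pinv qinv : ℝ) : Prop :=
  ∃ C : ℝ, 0 ≤ C ∧ ∀ E F : Set (ℝ × ℝ × ℝ), MeasurableSet E → MeasurableSet F →
    volume E < ⊤ → volume F < ⊤ →
    pairing φ R E F ≤ ENNReal.ofReal C * volume E ^ pinv * volume F ^ (1 - qinv)

/-- The unit square `[−1,1]²` in ℝ². -/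
def unitSquare : Set (ℝ × ℝ) := Set.Icc ((-1, -1) : ℝ × ℝ) (1, 1)

/-- For a mixed homogeneous polynomial φ with exponent κ = (κ₁,κ₂) and homogeneous
distance d_h = 1/(κ₁+κ₂): if `T = T_{[−1,1]²}` is of restricted weak type `(p,q)`,
then `1/q ≥ 1/p − 1/(d_h+1)`. -/
lemma exp_compare {A B a f : ℝ} (hA : 0 < A) (hB : 0 ≤ B)
    (h : ∀ δ : ℝ, 0 < δ → δ ≤ 1 → A * δ ^ a ≤ B * δ ^ f) : f ≤ a := by
  by_contra h'
  push_neg at h'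
  set e : ℝ := a - f with he_def
  have he : e < 0 := by simp [he_def]; linarith
  have key : ∀ δ : ℝ, 0 < δ → δ ≤ 1 → A * δ ^ e ≤ B := by
    intro δ hδ hδ1
    have h1 := h δ hδ hδ1
    have hf : (0:ℝ) < δ ^ f := Real.rpow_pos_of_pos hδ f
    have h2 : δ ^ a = δ ^ e * δ ^ f := by
      rw [← Real.rpow_add hδ, he_def, sub_add_cancel]
    rw [h2] at h1
    have h3 : (A * δ ^ e) * δ ^ f ≤ B * δ ^ f := by nlinarith
    exact le_of_mul_le_mul_right h3 hf
  set b : ℝ := B / A + 1 with hb_def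
  have hb1 : 1 ≤ b := by
    have : 0 ≤ B / A := div_nonneg hB hA.le
    simp [hb_def]; linarith
  have hb0 : (0:ℝ) < b := by linarith
  set δ : ℝ := b ^ (1 / e) with hδ_def
  have hδ0 : 0 < δ := Real.rpow_pos_of_pos hb0 _
  have hδ1 : δ ≤ 1 :=
    Real.rpow_le_one_of_one_le_of_nonpos hb1 (by
      have := one_div_neg.2 he
      linarith)
  have hδe : δ ^ e = b := by
    rw [hδ_def, ← Real.rpow_mul hb0.le, one_div, inv_mul_cancel₀ he.ne, Real.rpow_one]
  have hkey := key δ hδ0 hδ1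
  rw [hδe, hb_def] at hkey
  have h4 : A * (B / A) + A ≤ B := by nlinarith
  rw [mul_div_cancel₀ _ hA.ne'] at h4
  linarith

theorem stmt_10 (φp : MvPolynomial (Fin 2) ℝ) (κ₁ κ₂ : ℝ) (hκ₁ : 0 < κ₁) (hκ₂ : 0 < κ₂)
    (hmh : ∀ σ > (0 : ℝ), ∀ z₁ z₂ : ℝ,
      eval ![σ ^ κ₁ * z₁, σ ^ κ₂ * z₂] φp = σ * eval ![z₁, z₂] φp)
    (pinv qinv : ℝ) (hp0 : 0 ≤ pinv) (hp1 : pinv ≤ 1) (hq0 : 0 ≤ qinv) (hq1 : qinv ≤ 1)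
    (hrwt : RWT (fun t => eval ![t.1, t.2] φp) unitSquare pinv qinv) :
    pinv - 1 / (1 / (κ₁ + κ₂) + 1) ≤ qinv := by
  set φf : ℝ × ℝ → ℝ := fun t => eval ![t.1, t.2] φp with hφf
  obtain ⟨C, hC0, hC⟩ := hrwt
  -- bound on φ on the unit square
  have hcont : Continuous φf := by
    apply (MvPolynomial.continuous_eval φp).comp
    apply continuous_pi
    intro i
    fin_cases i
    · simpa using continuous_fst
    · simpa using continuous_snd
  obtain ⟨M₀, hM₀⟩ :=
    (isCompact_Icc : IsCompact unitSquare).exists_bound_of_continuousOn hcont.continuousOn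
  set M : ℝ := max M₀ 1 with hM_def
  have hM1 : (1:ℝ) ≤ M := le_max_right _ _
  have hM0 : (0:ℝ) < M := lt_of_lt_of_le one_pos hM1
  have hMb : ∀ t ∈ unitSquare, |φf t| ≤ M := fun t ht => by
    have := hM₀ t ht
    rw [Real.norm_eq_abs] at this
    exact this.trans (le_max_left _ _)
  set K : ℝ := κ₁ + κ₂ with hK_def
  have hK : 0 < K := by positivity
  have hK1 : 0 < K + 1 := by linarith
  -- the key scaling estimate
  have key : ∀ δ : ℝ, 0 < δ → δ ≤ 1 →
      2 * M * δ ^ (2 * K + 1) ≤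
        (C * (16 * M) ^ pinv * (2 * M) ^ (1 - qinv)) * δ ^ ((K + 1) * (pinv + 1 - qinv)) := by
    intro δ hδ hδ1
    set a : ℝ := δ ^ κ₁ with ha_def
    set b : ℝ := δ ^ κ₂ with hb_def
    have ha0 : 0 < a := Real.rpow_pos_of_pos hδ _
    have hb0 : 0 < b := Real.rpow_pos_of_pos hδ _
    have ha1 : a ≤ 1 := Real.rpow_le_one hδ.le hδ1 hκ₁.le
    have hb1 : b ≤ 1 := Real.rpow_le_one hδ.le hδ1 hκ₂.le
    set m : ℝ := M * δ with hm_def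
    have hm0 : 0 < m := by positivity
    set E : Set (ℝ × ℝ × ℝ) :=
      Set.Icc (-a) a ×ˢ (Set.Icc (-b) b ×ˢ Set.Icc (-(2*m)) (2*m)) with hE_def
    set F : Set (ℝ × ℝ × ℝ) :=
      Set.Icc 0 a ×ˢ (Set.Icc 0 b ×ˢ Set.Icc (-m) m) with hF_def
    set S : Set (ℝ × ℝ) := Set.Icc 0 a ×ˢ Set.Icc 0 b with hS_def
    have hEm : MeasurableSet E := measurableSet_Icc.prod (measurableSet_Icc.prod measurableSet_Icc)
    have hFm : MeasurableSet F := measurableSet_Icc.prod (measurableSet_Icc.prod measurableSet_Icc)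
    have hSm : MeasurableSet S := measurableSet_Icc.prod measurableSet_Icc
    have hP0 : (0:ℝ) < δ ^ (K + 1) := Real.rpow_pos_of_pos hδ _
    have hPab : δ ^ (K + 1) = a * b * δ := by
      rw [ha_def, hb_def, hK_def, Real.rpow_add hδ, Real.rpow_add hδ, Real.rpow_one]
    -- volumes
    have hvolE : volume E = ENNReal.ofReal (16 * M * δ ^ (K + 1)) := by
      rw [hE_def, Measure.volume_eq_prod, Measure.prod_prod, Measure.volume_eq_prod,
        Measure.prod_prod, Real.volume_Icc, Real.volume_Icc, Real.volume_Icc,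
        ← ENNReal.ofReal_mul (by linarith), ← ENNReal.ofReal_mul (by linarith)]
      congr 1
      rw [hPab]; ring
    have hvolF : volume F = ENNReal.ofReal (2 * M * δ ^ (K + 1)) := by
      rw [hF_def, Measure.volume_eq_prod, Measure.prod_prod, Measure.volume_eq_prod,
        Measure.prod_prod, Real.volume_Icc, Real.volume_Icc, Real.volume_Icc,
        ← ENNReal.ofReal_mul (by linarith), ← ENNReal.ofReal_mul (by linarith)]
      congr 1
      rw [hPab]; ring
    have hvolS : volume S = ENNReal.ofReal (δ ^ K) := by
      rw [hS_def, Measure.volume_eq_prod, Measure.prod_prod, Real.volume_Icc, Real.volume_Icc,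
        ← ENNReal.ofReal_mul (by linarith)]
      congr 1
      rw [ha_def, hb_def, hK_def, Real.rpow_add hδ]; ring
    -- the square S sits inside the unit square
    have hSsub : S ⊆ unitSquare := by
      rintro ⟨t₁, t₂⟩ ht
      simp only [hS_def, Set.mem_prod, Set.mem_Icc] at ht
      simp only [unitSquare, Set.mem_Icc, Prod.le_def]
      refine ⟨⟨by linarith [ht.1.1], by linarith [ht.2.1]⟩, ⟨by linarith [ht.1.2], by linarith [ht.2.2]⟩⟩
    -- bound on φ on S
    have hφS : ∀ t ∈ S, |φf t| ≤ m := by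
      rintro ⟨t₁, t₂⟩ ht
      simp only [hS_def, Set.mem_prod, Set.mem_Icc] at ht
      set s₁ : ℝ := t₁ / a with hs₁
      set s₂ : ℝ := t₂ / b with hs₂
      have hs₁m : 0 ≤ s₁ ∧ s₁ ≤ 1 :=
        ⟨div_nonneg ht.1.1 ha0.le, (div_le_one ha0).2 ht.1.2⟩
      have hs₂m : 0 ≤ s₂ ∧ s₂ ≤ 1 :=
        ⟨div_nonneg ht.2.1 hb0.le, (div_le_one hb0).2 ht.2.2⟩
      have ht₁ : t₁ = δ ^ κ₁ * s₁ := by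
        rw [hs₁, ha_def]; field_simp
      have ht₂ : t₂ = δ ^ κ₂ * s₂ := by
        rw [hs₂, hb_def]; field_simp
      have heq : φf (t₁, t₂) = δ * eval ![s₁, s₂] φp := by
        simp only [hφf]
        rw [show (![t₁, t₂] : Fin 2 → ℝ) = ![δ ^ κ₁ * s₁, δ ^ κ₂ * s₂] by
          rw [ht₁, ht₂]]
        exact hmh δ hδ s₁ s₂
      have hsu : ((s₁, s₂) : ℝ × ℝ) ∈ unitSquare := by
        simp only [unitSquare, Set.mem_Icc, Prod.le_def]
        exact ⟨⟨by linarith [hs₁m.1], by linarith [hs₂m.1]⟩, hs₁m.2, hs₂m.2⟩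
      have hb := hMb (s₁, s₂) hsu
      have : |φf (t₁, t₂)| = δ * |eval ![s₁, s₂] φp| := by
        rw [heq, abs_mul, abs_of_pos hδ]
      rw [this, hm_def]
      have hφeq : φf (s₁, s₂) = eval ![s₁, s₂] φp := rfl
      rw [hφeq] at hb
      calc δ * |eval ![s₁, s₂] φp| ≤ δ * M := by
            exact mul_le_mul_of_nonneg_left hb hδ.le
        _ = M * δ := by ring
    -- membership: shifted points land in E
    have hmem : ∀ x ∈ F, ∀ t ∈ S, (x.1 - t.1, x.2.1 - t.2, x.2.2 - φf t) ∈ E := by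
      rintro ⟨x₁, x₂, x₃⟩ hx ⟨t₁, t₂⟩ ht
      have hφt := hφS (t₁, t₂) ht
      simp only [hF_def, Set.mem_prod, Set.mem_Icc] at hx
      simp only [hS_def, Set.mem_prod, Set.mem_Icc] at ht
      rw [abs_le] at hφt
      simp only [hE_def, Set.mem_prod, Set.mem_Icc]
      refine ⟨⟨by linarith [hx.1.1, hx.1.2, ht.1.1, ht.1.2],
              by linarith [hx.1.1, hx.1.2, ht.1.1, ht.1.2]⟩,
        ⟨by linarith [hx.2.1.1, hx.2.1.2, ht.2.1, ht.2.2],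
         by linarith [hx.2.1.1, hx.2.1.2, ht.2.1, ht.2.2]⟩,
        by linarith [hx.2.2.1, hx.2.2.2, hφt.1, hφt.2],
        by linarith [hx.2.2.1, hx.2.2.2, hφt.1, hφt.2]⟩
    -- lower bound on the pairing
    have hlow : ENNReal.ofReal (δ ^ K) * volume F ≤ pairing φf unitSquare E F := by
      have hrw : (fun x => avgOp φf unitSquare (E.indicator 1) x * F.indicator 1 x)
          = F.indicator (avgOp φf unitSquare (E.indicator 1)) := by
        funext x
        by_cases hx : x ∈ F <;> simp [Set.indicator_apply, hx]
      rw [pairing, hrw, lintegral_indicator hFm]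
      calc ENNReal.ofReal (δ ^ K) * volume F
          = ∫⁻ _ in F, ENNReal.ofReal (δ ^ K) ∂volume := by rw [setLIntegral_const]
        _ ≤ ∫⁻ x in F, avgOp φf unitSquare (E.indicator 1) x ∂volume := by
            apply setLIntegral_mono' hFm
            intro x hx
            have h1 : ENNReal.ofReal (δ ^ K) = ∫⁻ _ in S, 1 ∂volume := by
              rw [setLIntegral_one, hvolS]
            rw [h1, avgOp]
            calc ∫⁻ _ in S, 1 ∂volume
                ≤ ∫⁻ t in S, (E.indicator 1) (x.1 - t.1, x.2.1 - t.2, x.2.2 - φf t) ∂volume := by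
                  apply setLIntegral_mono' hSm
                  intro t ht
                  simp [Set.indicator_of_mem (hmem x hx t ht)]
              _ ≤ ∫⁻ t in unitSquare, (E.indicator 1) (x.1 - t.1, x.2.1 - t.2, x.2.2 - φf t) ∂volume :=
                  lintegral_mono_set hSsub
    -- upper bound from the restricted weak type hypothesis
    have hup := hC E F hEm hFm (by rw [hvolE]; exact ENNReal.ofReal_lt_top)
      (by rw [hvolF]; exact ENNReal.ofReal_lt_top)
    have hcomb := hlow.trans hup
    rw [hvolE, hvolF] at hcomb
    have hEpos : (0:ℝ) < 16 * M * δ ^ (K + 1) := by positivity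
    have hFpos : (0:ℝ) < 2 * M * δ ^ (K + 1) := by positivity
    rw [ENNReal.ofReal_rpow_of_pos hEpos, ENNReal.ofReal_rpow_of_pos hFpos,
      ← ENNReal.ofReal_mul (by positivity), ← ENNReal.ofReal_mul hC0,
      ← ENNReal.ofReal_mul (by positivity)] at hcomb
    have hreal : δ ^ K * (2 * M * δ ^ (K + 1)) ≤
        C * (16 * M * δ ^ (K + 1)) ^ pinv * (2 * M * δ ^ (K + 1)) ^ (1 - qinv) :=
      (ENNReal.ofReal_le_ofReal_iff (by positivity)).1 hcomb
    -- rpow algebra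
    have e1 : δ ^ K * (2 * M * δ ^ (K + 1)) = 2 * M * δ ^ (2 * K + 1) := by
      rw [show (2 * K + 1 : ℝ) = K + (K + 1) by ring, Real.rpow_add hδ K (K + 1)]; ring
    have e2 : (16 * M * δ ^ (K + 1)) ^ pinv = (16 * M) ^ pinv * δ ^ ((K + 1) * pinv) := by
      rw [Real.mul_rpow (by positivity) hP0.le, ← Real.rpow_mul hδ.le]
    have e3 : (2 * M * δ ^ (K + 1)) ^ (1 - qinv)
        = (2 * M) ^ (1 - qinv) * δ ^ ((K + 1) * (1 - qinv)) := by
      rw [Real.mul_rpow (by positivity) hP0.le, ← Real.rpow_mul hδ.le]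
    have e4 : δ ^ ((K + 1) * pinv) * δ ^ ((K + 1) * (1 - qinv))
        = δ ^ ((K + 1) * (pinv + 1 - qinv)) := by
      rw [← Real.rpow_add hδ]; ring_nf
    rw [e2, e3] at hreal
    calc 2 * M * δ ^ (2 * K + 1) = δ ^ K * (2 * M * δ ^ (K + 1)) := e1.symm
      _ ≤ C * ((16 * M) ^ pinv * δ ^ ((K + 1) * pinv))
            * ((2 * M) ^ (1 - qinv) * δ ^ ((K + 1) * (1 - qinv))) := hreal
      _ = (C * (16 * M) ^ pinv * (2 * M) ^ (1 - qinv))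
            * (δ ^ ((K + 1) * pinv) * δ ^ ((K + 1) * (1 - qinv))) := by ring
      _ = _ := by rw [e4]
    -- conclude via exponent comparison
  have hcmp : (K + 1) * (pinv + 1 - qinv) ≤ 2 * K + 1 :=
    exp_compare (by positivity)
      (by positivity) key
  have h5 : 1 / (1 / K + 1) = K / (K + 1) := by
    rw [one_div, one_div]
    rw [show K⁻¹ + 1 = (K + 1) / K by field_simp; ring]
    rw [inv_div]
  rw [hK_def] at h5 ⊢
  rw [← hK_def, h5]
  have h6 : pinv - qinv ≤ K / (K + 1) := by
    rw [le_div_iff₀ hK1]; nlinarith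
  linarith
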